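/- For all x ≥ 0, Mill's ratio Θ(x) = (1 − Φ(x))·e^{x²/2} satisfies 1/(√(2π)(1+x)) ≤ Θ(x) ≤ 1/(√π·(1+x)), where Φ is the standard normal distribution function. -/

import Mathlib

open MeasureTheory Real

/-- The standard normal distribution function. -/
noncomputable def stdNormalCDF (x : ℝ) : ℝ :=
  ∫ t in Set.Iic x, (Real.sqrt (2 * Real.pi))⁻¹ * Real.exp (-t ^ 2 / 2)

namespace MillsAux

open Set Filter

noncomputable def g (t : ℝ) : ℝ := Real.exp (-t ^ 2 / 2)

lemma g_eq : g = fun t => Real.exp (-(1/2 : ℝ) * t ^ 2) := by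
  funext t; unfold g; ring_nf

lemma g_cont : Continuous g := by
  unfold g; continuity

lemma g_integrable : Integrable g := by
  rw [g_eq]
  exact integrable_exp_neg_mul_sq (by norm_num)

lemma sqrt_two_pi : Real.sqrt (π / (1/2)) = Real.sqrt (2 * π) := by
  norm_num [mul_comm]

lemma integral_g : ∫ t, g t = Real.sqrt (2 * π) := by
  rw [g_eq, integral_gaussian, sqrt_two_pi]

lemma integral_g_Ioi : ∫ t in Ioi (0:ℝ), g t = Real.sqrt (2 * π) / 2 := by
  rw [g_eq, integral_gaussian_Ioi, sqrt_two_pi]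

noncomputable def J (x : ℝ) : ℝ := ∫ s in Ioi (0:ℝ), Real.exp (-(x*s) - s^2/2)

noncomputable def I (x : ℝ) : ℝ := ∫ t in Ioi x, g t

lemma J_integrand_integrable {x : ℝ} (hx : 0 ≤ x) :
    IntegrableOn (fun s => Real.exp (-(x*s) - s^2/2)) (Ioi 0) := by
  refine (g_integrable.integrableOn (s := Ioi 0)).mono' ?_ ?_
  · exact (Continuous.aestronglyMeasurable (by continuity))
  · filter_upwards [ae_restrict_mem measurableSet_Ioi] with s hs
    rw [Real.norm_eq_abs, abs_of_pos (Real.exp_pos _)]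
    unfold g
    apply Real.exp_le_exp.2
    nlinarith [mem_Ioi.mp hs, mul_nonneg hx (le_of_lt (mem_Ioi.mp hs))]

lemma shift (x : ℝ) : ∫ s in Ioi (0:ℝ), g (s + x) = I x := by
  unfold I
  rw [← integral_indicator measurableSet_Ioi, ← integral_indicator measurableSet_Ioi,
    ← integral_add_right_eq_self (fun t => (Ioi x).indicator g t) x]
  congr 1 with s
  by_cases h : s ∈ Ioi (0:ℝ)
  · rw [indicator_of_mem h, indicator_of_mem (by simpa using h)]
  · rw [indicator_of_notMem h, indicator_of_notMem (by simpa using h)]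

lemma I_eq (x : ℝ) : I x = Real.exp (-x^2/2) * J x := by
  rw [← shift, J, ← integral_const_mul]
  congr 1 with s
  unfold g
  rw [← Real.exp_add]
  ring_nf

lemma exp_decay_integrableOn {b : ℝ} (hb : 0 < b) :
    IntegrableOn (fun s : ℝ => Real.exp (-(b*s))) (Ioi 0) := by
  have := exp_neg_integrableOn_Ioi 0 hb
  simpa [neg_mul] using this

lemma integral_exp_neg_mul_Ioi {b : ℝ} (hb : 0 < b) :
    ∫ s in Ioi (0:ℝ), Real.exp (-(b*s)) = 1/b := by
  have hderiv : ∀ s ∈ Ioi (0:ℝ), HasDerivAt (fun u : ℝ => -Real.exp (-(b*u)) / b)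
      (Real.exp (-(b*s))) s := by
    intro s _
    have h1 : HasDerivAt (fun u : ℝ => -(b*u)) (-b) s := by
      simpa using ((hasDerivAt_id s).const_mul b).fun_neg
    have h2 : HasDerivAt (fun u : ℝ => -Real.exp (-(b*u)) / b) (-(Real.exp (-(b * s)) * -b) / b) s :=
      (h1.exp).fun_neg.div_const b
    convert h2 using 1
    field_simp
  have htend : Tendsto (fun u : ℝ => -Real.exp (-(b*u)) / b) atTop (nhds 0) := by
    have h0 : Tendsto (fun u : ℝ => -(b*u)) atTop atBot := by
      apply Filter.tendsto_neg_atBot_iff.mpr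
      exact Tendsto.const_mul_atTop hb tendsto_id
    have := (Real.tendsto_exp_atBot.comp h0).neg.div_const b
    simpa using this
  have hcont : ContinuousWithinAt (fun u : ℝ => -Real.exp (-(b*u)) / b) (Ici 0) 0 := by
    apply Continuous.continuousWithinAt
    continuity
  have := integral_Ioi_of_hasDerivAt_of_tendsto hcont hderiv (exp_decay_integrableOn hb) htend
  rw [this]
  simp [div_eq_mul_inv, one_div]

lemma J_lower {x : ℝ} (hx : 0 ≤ x) : 1/(1+x) ≤ J x := by
  have h1x : (0:ℝ) < 1 + x := by linarith
  have hkey : 0 ≤ J x - 1/(1+x) := by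
    have hint1 := J_integrand_integrable hx
    have hint2 := exp_decay_integrableOn h1x
    have heq : J x - 1/(1+x)
        = ∫ s in Ioi (0:ℝ), (Real.exp (-(x*s) - s^2/2) - Real.exp (-((1+x)*s))) := by
      rw [integral_sub hint1 hint2, J, integral_exp_neg_mul_Ioi h1x]
    rw [heq]
    have hint3 : IntegrableOn (fun s : ℝ => Real.exp (-(2*x)) * (g s - Real.exp (-(1*s)))) (Ioi 0) :=
      ((g_integrable.integrableOn.sub (exp_decay_integrableOn one_pos)).const_mul _)
    have hmono : ∫ s in Ioi (0:ℝ), Real.exp (-(2*x)) * (g s - Real.exp (-(1*s)))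
        ≤ ∫ s in Ioi (0:ℝ), (Real.exp (-(x*s) - s^2/2) - Real.exp (-((1+x)*s))) := by
      apply setIntegral_mono_on hint3 (hint1.sub hint2) measurableSet_Ioi
      intro s hs
      simp only [Pi.sub_apply]
      have hs0 : 0 < s := mem_Ioi.mp hs
      have hrhs : Real.exp (-(x*s) - s^2/2) - Real.exp (-((1+x)*s))
          = Real.exp (-(x*s)) * (g s - Real.exp (-(1*s))) := by
        simp only [g, mul_sub, ← Real.exp_add]
        ring_nf
      rw [hrhs]
      rcases le_total s 2 with h2 | h2
      · have hD : 0 ≤ g s - Real.exp (-(1*s)) := by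
          have : Real.exp (-(1*s)) ≤ g s := by
            apply Real.exp_le_exp.2; nlinarith
          linarith
        apply mul_le_mul_of_nonneg_right _ hD
        apply Real.exp_le_exp.2; nlinarith
      · have hD : g s - Real.exp (-(1*s)) ≤ 0 := by
          have : g s ≤ Real.exp (-(1*s)) := by
            apply Real.exp_le_exp.2; nlinarith
          linarith
        apply mul_le_mul_of_nonpos_right _ hD
        apply Real.exp_le_exp.2; nlinarith
    refine le_trans ?_ hmono
    rw [integral_const_mul, integral_sub g_integrable.integrableOn (exp_decay_integrableOn one_pos),
      integral_g_Ioi, integral_exp_neg_mul_Ioi one_pos]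
    have hpi : (2:ℝ) ≤ Real.sqrt (2*π) := by
      rw [Real.le_sqrt (by norm_num) (by positivity)]
      nlinarith [Real.pi_gt_three]
    have := Real.exp_pos (-(2*x))
    nlinarith
  linarith

lemma hasDerivAt_I (x : ℝ) : HasDerivAt I (-(g x)) x := by
  have hIeq : ∀ u : ℝ, I u = ((∫ t, g t) - ∫ t in Iic (0:ℝ), g t) - ∫ t in (0:ℝ)..u, g t := by
    intro u
    have h1 : (∫ t in Iic u, g t) + I u = ∫ t, g t :=
      intervalIntegral.integral_Iic_add_Ioi g_integrable.integrableOn g_integrable.integrableOn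
    have h2 : (∫ t in Iic u, g t) - ∫ t in Iic (0:ℝ), g t = ∫ t in (0:ℝ)..u, g t :=
      intervalIntegral.integral_Iic_sub_Iic g_integrable.integrableOn g_integrable.integrableOn
    linarith
  have hFTC : HasDerivAt (fun u => ∫ t in (0:ℝ)..u, g t) (g x) x :=
    intervalIntegral.integral_hasDerivAt_right
      (g_integrable.intervalIntegrable)
      (g_cont.stronglyMeasurableAtFilter _ _)
      g_cont.continuousAt
  have := (hasDerivAt_const x ((∫ t, g t) - ∫ t in Iic (0:ℝ), g t)).sub hFTC
  simp only [zero_sub] at this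
  exact this.congr_of_eventuallyEq (Eventually.of_forall fun u => (hIeq u))

lemma J_eq (x : ℝ) : J x = Real.exp (x^2/2) * I x := by
  rw [I_eq, ← mul_assoc, ← Real.exp_add]
  ring_nf
  simp

lemma hasDerivAt_J (x : ℝ) : HasDerivAt J (x * J x - 1) x := by
  have h1 : HasDerivAt (fun u : ℝ => u^2/2) x x := by
    simpa using (((hasDerivAt_id x).pow 2).div_const 2)
  have h2 : HasDerivAt (fun u : ℝ => Real.exp (u^2/2)) (Real.exp (x^2/2) * x) x := by
    simpa using h1.exp
  have h3 := h2.mul (hasDerivAt_I x)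
  have h4 : HasDerivAt J (Real.exp (x^2/2) * x * I x + Real.exp (x^2/2) * -(g x)) x := by
    refine (h3.congr_of_eventuallyEq (Eventually.of_forall fun u => J_eq u))
  convert h4 using 1
  rw [I_eq, g]
  have hone : Real.exp (x^2/2) * Real.exp (-x^2/2) = 1 := by
    rw [← Real.exp_add]; ring_nf; exact Real.exp_zero
  linear_combination (1 - x * J x) * hone

lemma sqrt2_gt : (1.41 : ℝ) < Real.sqrt 2 := by
  rw [show (1.41:ℝ) = Real.sqrt (1.41^2) by rw [Real.sqrt_sq]; norm_num]
  apply Real.sqrt_lt_sqrt <;> norm_num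

lemma J_le_inv {y : ℝ} (hy : 0 < y) : J y ≤ 1/y := by
  rw [← integral_exp_neg_mul_Ioi hy]
  apply setIntegral_mono_on (J_integrand_integrable hy.le) (exp_decay_integrableOn hy)
    measurableSet_Ioi
  intro s hs
  apply Real.exp_le_exp.2
  nlinarith [sq_nonneg s]

lemma F_cont : Continuous (fun y => (1+y) * J y) := by
  have : Continuous J := by
    rw [continuous_iff_continuousAt]
    exact fun y => (hasDerivAt_J y).continuousAt
  continuity

lemma F_big : ∀ y : ℝ, (5/2 : ℝ) ≤ y → (1+y) * J y < Real.sqrt 2 := by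
  intro y hy
  have hy0 : (0:ℝ) < y := by linarith
  have h1 : (1+y) * J y ≤ (1+y) * (1/y) :=
    mul_le_mul_of_nonneg_left (J_le_inv hy0) (by linarith)
  have h2 : (1+y) * (1/y) ≤ 1.4 := by
    rw [mul_one_div, div_le_iff₀ hy0]; linarith
  linarith [sqrt2_gt]

lemma F_le {x : ℝ} (hx : 0 ≤ x) : (1+x) * J x ≤ Real.sqrt 2 := by
  by_contra hcon
  push_neg at hcon
  set F := fun y : ℝ => (1+y) * J y with hF
  have hx5 : x < 5/2 := by
    by_contra h
    push_neg at h
    exact absurd (F_big x h) (by simpa using hcon.not_gt ∘ id)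
  set S := Icc x (5/2 : ℝ) ∩ {y | Real.sqrt 2 ≤ F y} with hS
  have hne : S.Nonempty := ⟨x, ⟨le_rfl, hx5.le⟩, hcon.le⟩
  have hbdd : BddAbove S := BddAbove.mono inter_subset_left bddAbove_Icc
  have hclosed : IsClosed S :=
    IsClosed.inter isClosed_Icc (isClosed_le continuous_const F_cont)
  set z := sSup S with hz
  have hzS : z ∈ S := hclosed.csSup_mem hne hbdd
  obtain ⟨⟨hxz, hz52⟩, hzF⟩ := hzS
  have hz0 : 0 ≤ z := le_trans hx hxz
  have hzlt : z < 5/2 := lt_of_le_of_ne hz52 (by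
    intro h
    exact absurd hzF (by rw [h]; exact (F_big _ le_rfl).not_ge))
  have hJz : Real.sqrt 2 ≤ (1+z) * J z := hzF
  have h1z : (0:ℝ) < 1 + z := by linarith
  have hFz : HasDerivAt F (J z + (1+z) * (z * J z - 1)) z := by
    have := ((hasDerivAt_id z).const_add 1).fun_mul (hasDerivAt_J z)
    simpa using this
  have hd_pos : 0 < J z + (1+z) * (z * J z - 1) := by
    have hr := sqrt2_gt
    have hr2 : Real.sqrt 2 ^ 2 = 2 := Real.sq_sqrt (by norm_num)
    have key : 0 < (1+z) * (J z + (1+z) * (z * J z - 1)) := by nlinarith [sq_nonneg (z-1)]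
    nlinarith [key, h1z]
  have hslope := (hasDerivAt_iff_tendsto_slope.mp hFz).eventually
    (eventually_gt_nhds hd_pos)
  have hmem : Ioo z (5/2 : ℝ) ∈ nhdsWithin z (Ioi z) := Ioo_mem_nhdsGT_of_mem ⟨le_rfl, hzlt⟩
  have hmono : nhdsWithin z (Ioi z) ≤ nhdsWithin z {z}ᶜ :=
    nhdsWithin_mono z (fun y hy => by simp [(mem_Ioi.mp hy).ne'])
  have hslope' := hslope.filter_mono hmono
  obtain ⟨y, hy1, hy2⟩ := (hslope'.and (eventually_of_mem hmem fun y hy => hy)).exists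
  have hyz : 0 < y - z := by
    have := hy2.1; linarith
  have hFy : Real.sqrt 2 ≤ F y := by
    have hs := hy1
    rw [slope_def_field] at hs
    have : 0 < F y - F z := by
      have := (div_pos_iff.mp hs)
      rcases this with ⟨h, _⟩ | ⟨_, h2⟩
      · linarith
      · linarith
    have hFzval : F z = (1+z) * J z := rfl
    linarith
  have hyS : y ∈ S := ⟨⟨le_trans hxz hy2.1.le, hy2.2.le⟩, hFy⟩
  have : y ≤ z := le_csSup hbdd hyS
  linarith [hy2.1]

lemma sqrt_2pi_pos : 0 < Real.sqrt (2*π) :=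
  Real.sqrt_pos.mpr (by positivity)

lemma theta_eq (x : ℝ) :
    (1 - stdNormalCDF x) * Real.exp (x ^ 2 / 2) = (Real.sqrt (2*π))⁻¹ * J x := by
  have hcdf : stdNormalCDF x = (Real.sqrt (2*π))⁻¹ * ∫ t in Iic x, g t := by
    rw [stdNormalCDF, ← integral_const_mul]
    rfl
  have hsplit : (∫ t in Iic x, g t) + I x = Real.sqrt (2*π) := by
    rw [← integral_g]
    exact intervalIntegral.integral_Iic_add_Ioi g_integrable.integrableOn g_integrable.integrableOn
  have h1 : 1 - stdNormalCDF x = (Real.sqrt (2*π))⁻¹ * I x := by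
    have hne := sqrt_2pi_pos.ne'
    rw [hcdf, show (∫ t in Iic x, g t) = Real.sqrt (2*π) - I x by linarith, mul_sub,
      inv_mul_cancel₀ hne]
    ring
  rw [h1, I_eq, mul_assoc, mul_assoc]
  congr 1
  rw [mul_comm, mul_assoc, ← Real.exp_add]
  ring_nf
  simp

end MillsAux

open MillsAux in
/-- Two-sided bound on Mill's ratio `Θ(x) = (1 - Φ(x)) e^{x²/2}`. -/
theorem mills_ratio_bounds (x : ℝ) (hx : 0 ≤ x) :
    1 / (Real.sqrt (2 * Real.pi) * (1 + x))
      ≤ (1 - stdNormalCDF x) * Real.exp (x ^ 2 / 2) ∧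
    (1 - stdNormalCDF x) * Real.exp (x ^ 2 / 2)
      ≤ 1 / (Real.sqrt Real.pi * (1 + x)) := by
  have h1x : (0:ℝ) < 1 + x := by linarith
  have hs := sqrt_2pi_pos
  rw [theta_eq]
  constructor
  · have := J_lower hx
    rw [div_le_iff₀ (by positivity), mul_comm]
    calc Real.sqrt (2*π) * (1+x) * ((Real.sqrt (2*π))⁻¹ * J x)
        = (1+x) * J x * (Real.sqrt (2*π) * (Real.sqrt (2*π))⁻¹) := by ring
      _ = (1+x) * J x := by rw [mul_inv_cancel₀ hs.ne']; ring
      _ ≥ (1+x) * (1/(1+x)) := by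
          apply mul_le_mul_of_nonneg_left this (by linarith)
      _ = 1 := by field_simp
  · have hF := F_le hx
    have hπ : Real.sqrt (2*π) = Real.sqrt 2 * Real.sqrt π := Real.sqrt_mul (by norm_num) π
    have hsπ : 0 < Real.sqrt π := Real.sqrt_pos.mpr Real.pi_pos
    have hs2 : 0 < Real.sqrt 2 := by positivity
    rw [le_div_iff₀ (by positivity)]
    calc (Real.sqrt (2*π))⁻¹ * J x * (Real.sqrt π * (1+x))
        = ((1+x) * J x) * (Real.sqrt π * (Real.sqrt (2*π))⁻¹) := by ring
      _ ≤ Real.sqrt 2 * (Real.sqrt π * (Real.sqrt (2*π))⁻¹) := by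
          apply mul_le_mul_of_nonneg_right hF (by positivity)
      _ = 1 := by rw [hπ]; field_simp
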